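/- arXiv:2311.16793 — 4 statements merged into one kernel-verified Lean document; each statement's English description precedes it below -/
import Mathlib

section
/- Under the latent factor model M̌ = Γ U + ε with Γ Γᵀ + Σ_ε invertible, Δ = (Γ Γᵀ + Σ_ε)⁻¹ Γ, L = Δᵀ M̌, and ψ = φᵀ(U − L) + η, the new error term ψ is uncorrelated with M̌ and with L: E[ψ · M̌] = 0 in ℝ^p and E[ψ · L] = 0 in ℝ^t. -/
open MeasureTheory Matrix

/-- With L = Δᵀ M̌ and ψ = φᵀ(U − L) + η, the new error term ψ is
uncorrelated with M̌ and with L: E[ψ · M̌] = 0 and E[ψ · L] = 0. -/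
theorem new_error_uncorrelated
    {p t : ℕ} (Γ : Matrix (Fin p) (Fin t) ℝ) (Sε : Matrix (Fin p) (Fin p) ℝ)
    {Ω : Type*} [MeasurableSpace Ω] (μ : Measure Ω) [IsProbabilityMeasure μ]
    (U : Ω → Fin t → ℝ) (ε : Ω → Fin p → ℝ)
    (hUU : ∀ i j, Integrable (fun ω => U ω i * U ω j) μ)
    (hεε : ∀ i j, Integrable (fun ω => ε ω i * ε ω j) μ)
    (hUε : ∀ i j, Integrable (fun ω => U ω i * ε ω j) μ)
    (hEUU : ∀ i j, ∫ ω, U ω i * U ω j ∂μ = (1 : Matrix (Fin t) (Fin t) ℝ) i j)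
    (hEεε : ∀ i j, ∫ ω, ε ω i * ε ω j ∂μ = Sε i j)
    (hEUε : ∀ i j, ∫ ω, U ω i * ε ω j ∂μ = 0)
    (M : Ω → Fin p → ℝ) (hM : ∀ ω, M ω = Γ *ᵥ U ω + ε ω)
    (hinv : IsUnit (Γ * Γᵀ + Sε).det)
    (Δ : Matrix (Fin p) (Fin t) ℝ) (hΔ : Δ = (Γ * Γᵀ + Sε)⁻¹ * Γ)
    (L : Ω → Fin t → ℝ) (hL : ∀ ω, L ω = Δᵀ *ᵥ M ω)
    (η : Ω → ℝ)
    (hηU : ∀ i, Integrable (fun ω => η ω * U ω i) μ)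
    (hηε : ∀ i, Integrable (fun ω => η ω * ε ω i) μ)
    (hEηU : ∀ i, ∫ ω, η ω * U ω i ∂μ = 0)
    (hEηε : ∀ i, ∫ ω, η ω * ε ω i ∂μ = 0)
    (φ : Fin t → ℝ)
    (ψ : Ω → ℝ) (hψ : ∀ ω, ψ ω = φ ⬝ᵥ (U ω - L ω) + η ω) :
    (∀ i, ∫ ω, ψ ω * M ω i ∂μ = 0) ∧ (∀ j, ∫ ω, ψ ω * L ω j ∂μ = 0) := by
  classical
  -- pointwise expansion of M
  have hMe : ∀ ω k, M ω k = (∑ b, Γ k b * U ω b) + ε ω k := by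
    intro ω k
    rw [hM ω]
    simp [Matrix.mulVec, dotProduct]
  -- swapped hypotheses
  have hεU : ∀ i j, Integrable (fun ω => ε ω i * U ω j) μ := by
    intro i j; simpa [mul_comm] using hUε j i
  have hEεU : ∀ i j, ∫ ω, ε ω i * U ω j ∂μ = 0 := by
    intro i j; rw [← hEUε j i]; simp_rw [mul_comm]
  -- integrability of U_i * M_k
  have hUMfe : ∀ i k, (fun ω => U ω i * M ω k)
      = fun ω => (∑ b, Γ k b * (U ω i * U ω b)) + U ω i * ε ω k := by
    intro i k; funext ω
    rw [hMe ω k, mul_add, Finset.mul_sum]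
    congr 1
    exact Finset.sum_congr rfl fun b _ => by ring
  have hUM : ∀ i k, Integrable (fun ω => U ω i * M ω k) μ := by
    intro i k
    rw [hUMfe i k]
    exact (integrable_finset_sum _ fun b _ => (hUU i b).const_mul _).add (hUε i k)
  have hEUM : ∀ i k, ∫ ω, U ω i * M ω k ∂μ = Γ k i := by
    intro i k
    rw [hUMfe i k, integral_add (integrable_finset_sum _ fun b _ => (hUU i b).const_mul _) (hUε i k),
      integral_finset_sum _ fun b _ => (hUU i b).const_mul _]
    simp_rw [integral_const_mul, hEUU, hEUε]
    simp [Matrix.one_apply, mul_ite]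
  -- ε_i * M_k
  have hεMfe : ∀ i k, (fun ω => ε ω i * M ω k)
      = fun ω => (∑ b, Γ k b * (ε ω i * U ω b)) + ε ω i * ε ω k := by
    intro i k; funext ω
    rw [hMe ω k, mul_add, Finset.mul_sum]
    congr 1
    exact Finset.sum_congr rfl fun b _ => by ring
  have hεM : ∀ i k, Integrable (fun ω => ε ω i * M ω k) μ := by
    intro i k
    rw [hεMfe i k]
    exact (integrable_finset_sum _ fun b _ => (hεU i b).const_mul _).add (hεε i k)
  have hEεM : ∀ i k, ∫ ω, ε ω i * M ω k ∂μ = Sε i k := by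
    intro i k
    rw [hεMfe i k, integral_add (integrable_finset_sum _ fun b _ => (hεU i b).const_mul _) (hεε i k),
      integral_finset_sum _ fun b _ => (hεU i b).const_mul _]
    simp_rw [integral_const_mul, hEεU, hEεε]
    simp
  -- M_i * M_k
  have hMMfe : ∀ i k, (fun ω => M ω i * M ω k)
      = fun ω => (∑ b, Γ i b * (U ω b * M ω k)) + ε ω i * M ω k := by
    intro i k; funext ω
    conv_lhs => rw [hMe ω i]
    rw [add_mul, Finset.sum_mul]
    congr 1
    exact Finset.sum_congr rfl fun b _ => by ring
  have hMM : ∀ i k, Integrable (fun ω => M ω i * M ω k) μ := by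
    intro i k
    rw [hMMfe i k]
    exact (integrable_finset_sum _ fun b _ => (hUM b k).const_mul _).add (hεM i k)
  have hEMM : ∀ i k, ∫ ω, M ω i * M ω k ∂μ = (Γ * Γᵀ + Sε) i k := by
    intro i k
    rw [hMMfe i k, integral_add (integrable_finset_sum _ fun b _ => (hUM b k).const_mul _) (hεM i k),
      integral_finset_sum _ fun b _ => (hUM b k).const_mul _]
    simp_rw [integral_const_mul, hEUM, hEεM]
    simp [Matrix.add_apply, Matrix.mul_apply, Matrix.transpose_apply]
  -- η * M_k
  have hηMfe : ∀ k, (fun ω => η ω * M ω k)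
      = fun ω => (∑ b, Γ k b * (η ω * U ω b)) + η ω * ε ω k := by
    intro k; funext ω
    rw [hMe ω k, mul_add, Finset.mul_sum]
    congr 1
    exact Finset.sum_congr rfl fun b _ => by ring
  have hηM : ∀ k, Integrable (fun ω => η ω * M ω k) μ := by
    intro k
    rw [hηMfe k]
    exact (integrable_finset_sum _ fun b _ => (hηU b).const_mul _).add (hηε k)
  have hEηM : ∀ k, ∫ ω, η ω * M ω k ∂μ = 0 := by
    intro k
    rw [hηMfe k, integral_add (integrable_finset_sum _ fun b _ => (hηU b).const_mul _) (hηε k),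
      integral_finset_sum _ fun b _ => (hηU b).const_mul _]
    simp_rw [integral_const_mul, hEηU, hEηε]
    simp
  -- symmetry of ΓΓᵀ + Sε
  have hSsymm : ∀ i k, Sε i k = Sε k i := by
    intro i k
    rw [← hEεε i k, ← hEεε k i]
    simp_rw [mul_comm]
  have hsymm : ∀ i k, (Γ * Γᵀ + Sε) i k = (Γ * Γᵀ + Sε) k i := by
    intro i k
    simp only [Matrix.add_apply, Matrix.mul_apply, Matrix.transpose_apply, hSsymm i k]
    congr 1
    exact Finset.sum_congr rfl fun b _ => mul_comm _ _
  -- key matrix identity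
  have hAΔ : (Γ * Γᵀ + Sε) * Δ = Γ := by
    rw [hΔ, ← Matrix.mul_assoc, Matrix.mul_nonsing_inv _ hinv, Matrix.one_mul]
  have hkey : ∀ a i, ∑ k, Δ k a * (Γ * Γᵀ + Sε) k i = Γ i a := by
    intro a i
    have h := congrArg (fun X => X i a) hAΔ
    simp only [Matrix.mul_apply] at h
    rw [← h]
    exact Finset.sum_congr rfl fun k _ => by rw [hsymm k i, mul_comm]
  -- expansion of L
  have hLe : ∀ ω a, L ω a = ∑ k, Δ k a * M ω k := by
    intro ω a
    rw [hL ω]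
    simp [Matrix.mulVec, dotProduct, Matrix.transpose_apply]
  -- expansion of ψ * M_i
  have hψMfe : ∀ i, (fun ω => ψ ω * M ω i)
      = fun ω => (∑ a, φ a * (U ω a * M ω i - ∑ k, Δ k a * (M ω k * M ω i))) + η ω * M ω i := by
    intro i; funext ω
    rw [hψ ω]
    simp only [dotProduct, Pi.sub_apply, add_mul, Finset.sum_mul]
    congr 1
    refine Finset.sum_congr rfl fun a _ => ?_
    rw [hLe ω a, mul_assoc, sub_mul, Finset.sum_mul]
    congr 2
    exact Finset.sum_congr rfl fun k _ => mul_assoc _ _ _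
  have hIk : ∀ (i : Fin p) (a : Fin t),
      Integrable (fun ω => ∑ k, Δ k a * (M ω k * M ω i)) μ :=
    fun i a => integrable_finset_sum _ fun k _ => (hMM k i).const_mul _
  have hIa : ∀ (i : Fin p) (a : Fin t),
      Integrable (fun ω => φ a * (U ω a * M ω i - ∑ k, Δ k a * (M ω k * M ω i))) μ :=
    fun i a => ((hUM a i).sub (hIk i a)).const_mul _
  have hIsum : ∀ i : Fin p,
      Integrable (fun ω => ∑ a, φ a * (U ω a * M ω i - ∑ k, Δ k a * (M ω k * M ω i))) μ :=
    fun i => integrable_finset_sum _ fun a _ => hIa i a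
  have hψM : ∀ i, Integrable (fun ω => ψ ω * M ω i) μ := by
    intro i
    rw [hψMfe i]
    exact (hIsum i).add (hηM i)
  have hEψM : ∀ i, ∫ ω, ψ ω * M ω i ∂μ = 0 := by
    intro i
    rw [hψMfe i, integral_add (hIsum i) (hηM i),
      integral_finset_sum _ (fun a _ => hIa i a), hEηM i, add_zero]
    refine Finset.sum_eq_zero fun a _ => ?_
    rw [integral_const_mul,
      integral_sub (hUM a i) (hIk i a),
      integral_finset_sum _ fun k _ => (hMM k i).const_mul _]
    simp_rw [integral_const_mul, hEMM, hEUM]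
    rw [hkey a i]
    simp
  refine ⟨hEψM, fun j => ?_⟩
  -- ψ * L_j
  have hψLfe : (fun ω => ψ ω * L ω j) = fun ω => ∑ k, Δ k j * (ψ ω * M ω k) := by
    funext ω
    rw [hLe ω j, Finset.mul_sum]
    exact Finset.sum_congr rfl fun k _ => by ring
  rw [hψLfe, integral_finset_sum _ fun k _ => (hψM k).const_mul _]
  simp_rw [integral_const_mul, hEψM]
  simp
end

section
/- Under the linear structural outcome model and the mediator model, the natural indirect effect through the j-th mediator equals β_{2j} E[g_j(z, X) − g_j(z', X)]: for any z, z' ∈ ℝ and any index j, E[Y(z, M_j→(z))] − E[Y(z, M_j→(z'))] = β_{2j} (E[g_j(z, X)] − E[g_j(z', X)]), where M_j→(z'') denotes the mediator vector M(z') with its j-th coordinate replaced by the j-th coordinate of M(z''). -/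
open MeasureTheory Matrix

/-- The natural indirect effect through the j-th mediator equals
β_{2j} (E[g_j(z,X)] − E[g_j(z',X)]), where M_j→(z'') is M(z') with its j-th
coordinate replaced by the j-th coordinate of M(z''). -/
theorem natural_indirect_effect_single_mediator
    {p q t : ℕ} (β₀ β₁ : ℝ) (β₂ : Fin p → ℝ) (β₃ : Fin q → ℝ) (φ : Fin t → ℝ)
    (Γ : Matrix (Fin p) (Fin t) ℝ)
    {Ω : Type*} [MeasurableSpace Ω] (μ : Measure Ω) [IsProbabilityMeasure μ]
    (X : Ω → Fin q → ℝ) (U : Ω → Fin t → ℝ) (ε : Ω → Fin p → ℝ) (η : Ω → ℝ)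
    (hX : ∀ i, Integrable (fun ω => X ω i) μ)
    (hU : ∀ i, Integrable (fun ω => U ω i) μ)
    (hε : ∀ i, Integrable (fun ω => ε ω i) μ)
    (hη : Integrable η μ)
    (hEU : ∀ i, ∫ ω, U ω i ∂μ = 0)
    (hEε : ∀ i, ∫ ω, ε ω i ∂μ = 0)
    (Y : ℝ → (Ω → Fin p → ℝ) → Ω → ℝ)
    (hY : ∀ z m ω, Y z m ω = β₀ + β₁ * z + β₂ ⬝ᵥ m ω + β₃ ⬝ᵥ X ω + φ ⬝ᵥ U ω + η ω)
    (g : ℝ → (Fin q → ℝ) → Fin p → ℝ)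
    (hg : ∀ z i, Integrable (fun ω => g z (X ω) i) μ)
    (M : ℝ → Ω → Fin p → ℝ)
    (hM : ∀ z ω, M z ω = g z (X ω) + Γ *ᵥ U ω + ε ω)
    (z z' : ℝ) (j : Fin p)
    (Mj : ℝ → Ω → Fin p → ℝ)
    (hMj : ∀ z'' ω, Mj z'' ω = Function.update (M z' ω) j (M z'' ω j)) :
    (∫ ω, Y z (Mj z) ω ∂μ) - (∫ ω, Y z (Mj z') ω ∂μ) =
      β₂ j * ((∫ ω, g z (X ω) j ∂μ) - ∫ ω, g z' (X ω) j ∂μ) := by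
  have hMint : ∀ z'' i, Integrable (fun ω => M z'' ω i) μ := by
    intro z'' i
    have he : (fun ω => M z'' ω i)
        = fun ω => g z'' (X ω) i + (∑ k, Γ i k * U ω k) + ε ω i := by
      funext ω; rw [hM]; simp [Matrix.mulVec, dotProduct]
    rw [he]
    exact ((hg z'' i).add (integrable_finset_sum _ fun k _ => (hU k).const_mul _)).add (hε i)
  have hMjint : ∀ z'' i, Integrable (fun ω => Mj z'' ω i) μ := by
    intro z'' i
    by_cases hij : i = j
    · subst hij
      have he : (fun ω => Mj z'' ω i) = fun ω => M z'' ω i := by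
        funext ω; rw [hMj]; simp
      rw [he]; exact hMint z'' i
    · have he : (fun ω => Mj z'' ω i) = fun ω => M z' ω i := by
        funext ω; rw [hMj, Function.update_of_ne hij]
      rw [he]; exact hMint z' i
  have hYint : ∀ z'', Integrable (fun ω => Y z (Mj z'') ω) μ := by
    intro z''
    simp only [hY, dotProduct]
    exact (((((integrable_const _).add
      (integrable_finset_sum _ fun i _ => (hMjint z'' i).const_mul _)).add
      (integrable_finset_sum _ fun i _ => (hX i).const_mul _)).add
      (integrable_finset_sum _ fun i _ => (hU i).const_mul _)).add hη)
  rw [← integral_sub (hYint z) (hYint z')]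
  have hpt : ∀ ω, Y z (Mj z) ω - Y z (Mj z') ω
      = β₂ j * (g z (X ω) j - g z' (X ω) j) := by
    intro ω
    have hdiff : β₂ ⬝ᵥ Mj z ω - β₂ ⬝ᵥ Mj z' ω = β₂ j * (M z ω j - M z' ω j) := by
      simp only [dotProduct, ← Finset.sum_sub_distrib]
      rw [Finset.sum_eq_single j]
      · rw [hMj, hMj]; simp [mul_sub]
      · intro i _ hij
        rw [hMj, hMj, Function.update_of_ne hij, Function.update_of_ne hij]
        ring
      · simp
    have hMd : M z ω j - M z' ω j = g z (X ω) j - g z' (X ω) j := by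
      rw [hM, hM]; simp
    calc Y z (Mj z) ω - Y z (Mj z') ω
        = β₂ ⬝ᵥ Mj z ω - β₂ ⬝ᵥ Mj z' ω := by rw [hY, hY]; ring
      _ = β₂ j * (M z ω j - M z' ω j) := hdiff
      _ = β₂ j * (g z (X ω) j - g z' (X ω) j) := by rw [hMd]
  simp_rw [hpt]
  rw [integral_const_mul, integral_sub (hg z j) (hg z' j)]
end

section
/- Let W : Ω → ℝ^s and L : Ω → ℝ^t be random vectors with all entries of the products W Wᵀ, W Lᵀ, L Lᵀ integrable, and let R = (Wᵀ, Lᵀ)ᵀ denote the concatenated random vector with H = E[R Rᵀ]. For any orthogonal t×t matrix A, let R_A = (Wᵀ, (A L)ᵀ)ᵀ and H_A = E[R_A R_Aᵀ]. Then H_A = P H Pᵀ where P is the block-diagonal matrix fromBlocks(I_s, 0, 0, A), and H_A is invertible if and only if H is invertible. In particular, the full-rank identification condition on H holds for one rotation of L if and only if it holds for every rotation of L. -/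
open MeasureTheory Matrix

/-- With R = (Wᵀ, Lᵀ)ᵀ, H = E[R Rᵀ], and R_A = (Wᵀ, (AL)ᵀ)ᵀ for an
orthogonal matrix A, one has H_A = P H Pᵀ with P = fromBlocks(I, 0, 0, A), and
H_A is invertible iff H is invertible. -/
theorem rank_condition_rotation_invariance
    {s t : ℕ} {Ω : Type*} [MeasurableSpace Ω] (μ : Measure Ω) [IsProbabilityMeasure μ]
    (W : Ω → Fin s → ℝ) (L : Ω → Fin t → ℝ)
    (hWW : ∀ i j, Integrable (fun ω => W ω i * W ω j) μ)
    (hWL : ∀ i j, Integrable (fun ω => W ω i * L ω j) μ)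
    (hLL : ∀ i j, Integrable (fun ω => L ω i * L ω j) μ)
    (R : Ω → (Fin s ⊕ Fin t) → ℝ) (hR : ∀ ω, R ω = Sum.elim (W ω) (L ω))
    (H : Matrix (Fin s ⊕ Fin t) (Fin s ⊕ Fin t) ℝ)
    (hH : ∀ i j, H i j = ∫ ω, R ω i * R ω j ∂μ)
    (A : Matrix (Fin t) (Fin t) ℝ) (hA₁ : A * Aᵀ = 1) (hA₂ : Aᵀ * A = 1)
    (RA : Ω → (Fin s ⊕ Fin t) → ℝ) (hRA : ∀ ω, RA ω = Sum.elim (W ω) (A *ᵥ L ω))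
    (HA : Matrix (Fin s ⊕ Fin t) (Fin s ⊕ Fin t) ℝ)
    (hHA : ∀ i j, HA i j = ∫ ω, RA ω i * RA ω j ∂μ) :
    HA = (Matrix.fromBlocks 1 0 0 A) * H * (Matrix.fromBlocks 1 0 0 A)ᵀ ∧
      (IsUnit HA.det ↔ IsUnit H.det) := by

  set P : Matrix (Fin s ⊕ Fin t) (Fin s ⊕ Fin t) ℝ := Matrix.fromBlocks 1 0 0 A with hP
  have hInt : ∀ i j, Integrable (fun ω => R ω i * R ω j) μ := by
    intro i j
    simp only [hR]
    rcases i with a | a <;> rcases j with b | b <;>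
      simp only [Sum.elim_inl, Sum.elim_inr]
    · exact hWW a b
    · exact hWL a b
    · simpa [mul_comm] using hWL b a
    · exact hLL a b
  have hRA' : ∀ ω, RA ω = P *ᵥ R ω := by
    intro ω
    rw [hRA, hR, hP, Matrix.fromBlocks_mulVec]
    simp
  have key : HA = P * H * Pᵀ := by
    ext i j
    rw [hHA]
    have hfun : (fun ω => RA ω i * RA ω j)
        = (fun ω => ∑ k, ∑ l, P i k * P j l * (R ω k * R ω l)) := by
      funext ω
      rw [hRA' ω]
      simp only [Matrix.mulVec, dotProduct]
      rw [Finset.sum_mul_sum]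
      exact Finset.sum_congr rfl fun k _ => Finset.sum_congr rfl fun l _ => by ring
    have rhs : (P * H * Pᵀ) i j = ∑ k, ∑ l, P i k * P j l * H k l := by
      rw [Matrix.mul_apply]
      simp only [Matrix.transpose_apply, Matrix.mul_apply, Finset.sum_mul]
      rw [Finset.sum_comm]
      exact Finset.sum_congr rfl fun k _ => Finset.sum_congr rfl fun l _ => by ring
    rw [hfun, integral_finset_sum _
        (fun k _ => integrable_finset_sum _ (fun l _ => ((hInt k l).const_mul _))), rhs]
    refine Finset.sum_congr rfl fun k _ => ?_
    rw [integral_finset_sum _ (fun l _ => ((hInt k l).const_mul _))]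
    refine Finset.sum_congr rfl fun l _ => ?_
    rw [integral_const_mul, hH]
  have hdetA : IsUnit A.det := by
    have h : A.det * Aᵀ.det = 1 := by rw [← Matrix.det_mul, hA₁, Matrix.det_one]
    exact IsUnit.of_mul_eq_one _ h
  have hdetP : IsUnit P.det := by
    rw [hP, Matrix.det_fromBlocks_zero₂₁, Matrix.det_one, one_mul]
    exact hdetA
  refine ⟨key, ?_⟩
  rw [key, Matrix.det_mul, Matrix.det_mul, Matrix.det_transpose]
  rw [IsUnit.mul_iff, IsUnit.mul_iff]
  have := hdetP
  tauto
end

section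
/- Consider the two-step mediation-pathway selection procedure. Suppose: (a) P(Â_n = 𝒜) → 1 as n → ∞; (b) for every j ∈ 𝒜_act, P(R_{n,j}) → 1 as n → ∞; (c) for every j ∈ 𝒜 \ 𝒜_act, limsup_{n→∞} P(R_{n,j}) ≤ α_j. Define the random selected active set Â_{act,n}(ω) = {j ∈ Â_n(ω) : ω ∈ R_{n,j}}. Then liminf_{n→∞} P(Â_{act,n} = 𝒜_act) ≥ 1 − Σ_{j ∈ 𝒜 \ 𝒜_act} α_j. -/
open MeasureTheory Filter

/-- Corollary 1: Consistency of the two-step mediation-pathway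
selection procedure: if P(Â_n = 𝒜) → 1, the rejection probability of each truly
active pathway tends to 1, and the limsup rejection probability of each inactive
pathway in 𝒜 is at most α_j, then
liminf P(Â_{act,n} = 𝒜_act) ≥ 1 − Σ_{j ∈ 𝒜 \ 𝒜_act} α_j. -/
theorem two_step_selection_consistency
    {Ω : Type*} [MeasurableSpace Ω] (μ : Measure Ω) [IsProbabilityMeasure μ]
    {p : ℕ} (𝒜 𝒜act : Finset (Fin p)) (hsub : 𝒜act ⊆ 𝒜)
    (Ahat : ℕ → Ω → Finset (Fin p)) (R : ℕ → Fin p → Set Ω)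
    (α : Fin p → ℝ) (hα0 : ∀ j, 0 ≤ α j) (hα1 : ∀ j, α j ≤ 1)
    (hmeasA : ∀ n, MeasurableSet {ω | Ahat n ω = 𝒜})
    (hmeasR : ∀ n j, MeasurableSet (R n j))
    (ha : Tendsto (fun n => (μ {ω | Ahat n ω = 𝒜}).toReal) atTop (nhds 1))
    (hb : ∀ j ∈ 𝒜act, Tendsto (fun n => (μ (R n j)).toReal) atTop (nhds 1))
    (hc : ∀ j ∈ 𝒜 \ 𝒜act, limsup (fun n => (μ (R n j)).toReal) atTop ≤ α j) :
    (1 - ∑ j ∈ 𝒜 \ 𝒜act, α j) ≤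
      liminf (fun n =>
        (μ {ω | {j | j ∈ Ahat n ω ∧ ω ∈ R n j} = (𝒜act : Set (Fin p))}).toReal)
        atTop := by
  set S := 𝒜 \ 𝒜act with hS
  set t : ℕ → ℝ := fun n =>
    (μ {ω | {j | j ∈ Ahat n ω ∧ ω ∈ R n j} = (𝒜act : Set (Fin p))}).toReal with ht
  set f : ℕ → ℝ := fun n => (μ {ω | Ahat n ω = 𝒜}).toReal with hf
  set g : ℕ → Fin p → ℝ := fun n j => (μ (R n j)).toReal with hg
  -- pointwise lower bound
  have key : ∀ n, 1 - (1 - f n) - (∑ j ∈ 𝒜act, (1 - g n j)) - (∑ j ∈ S, g n j) ≤ t n := by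
    intro n
    set A := {ω | Ahat n ω = 𝒜} with hA
    set B := ⋂ j ∈ 𝒜act, R n j with hB
    set C := ⋂ j ∈ S, (R n j)ᶜ with hC
    have hBm : MeasurableSet B := MeasurableSet.biInter (Set.to_countable _)
      (fun j _ => hmeasR n j)
    have hCm : MeasurableSet C := MeasurableSet.biInter (Set.to_countable _)
      (fun j _ => (hmeasR n j).compl)
    have hGm : MeasurableSet (A ∩ B ∩ C) := ((hmeasA n).inter hBm).inter hCm
    have hsubT : A ∩ B ∩ C ⊆
        {ω | {j | j ∈ Ahat n ω ∧ ω ∈ R n j} = (𝒜act : Set (Fin p))} := by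
      rintro ω ⟨⟨hA1, hB1⟩, hC1⟩
      simp only [hB, hC, Set.mem_iInter] at hB1 hC1
      have hA1' : Ahat n ω = 𝒜 := hA1
      show {j | j ∈ Ahat n ω ∧ ω ∈ R n j} = (𝒜act : Set (Fin p))
      ext j
      simp only [Set.mem_setOf_eq, Finset.coe_mem, Finset.mem_coe, hA1']
      constructor
      · rintro ⟨hj1, hj2⟩
        by_contra hjact
        exact hC1 j (Finset.mem_sdiff.mpr ⟨hj1, hjact⟩) hj2
      · intro hj
        exact ⟨hsub hj, hB1 j hj⟩
    -- union bound on the complement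
    have hcompl : μ (A ∩ B ∩ C)ᶜ ≤
        μ Aᶜ + ∑ j ∈ 𝒜act, μ (R n j)ᶜ + ∑ j ∈ S, μ (R n j) := by
      have hdecomp : (A ∩ B ∩ C)ᶜ =
          Aᶜ ∪ (⋃ j ∈ 𝒜act, (R n j)ᶜ) ∪ ⋃ j ∈ S, R n j := by
        simp [hB, hC, Set.compl_inter, Set.compl_iInter]
      rw [hdecomp]
      refine le_trans (measure_union_le _ _) ?_
      refine add_le_add (le_trans (measure_union_le _ _) (add_le_add le_rfl ?_)) ?_
      · exact measure_biUnion_finset_le _ _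
      · exact measure_biUnion_finset_le _ _
    have hfin : ∀ s : Set Ω, μ s ≠ ⊤ := fun s => measure_ne_top μ s
    have hRHSfin : μ Aᶜ + ∑ j ∈ 𝒜act, μ (R n j)ᶜ + ∑ j ∈ S, μ (R n j) ≠ ⊤ := by
      refine ENNReal.add_ne_top.mpr ⟨ENNReal.add_ne_top.mpr ⟨hfin _, ?_⟩, ?_⟩ <;>
        exact (ENNReal.sum_lt_top.mpr (fun j _ => (measure_lt_top μ _))).ne
    -- pass to real numbers
    have hcomplR : (μ (A ∩ B ∩ C)ᶜ).toReal ≤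
        (1 - f n) + (∑ j ∈ 𝒜act, (1 - g n j)) + (∑ j ∈ S, g n j) := by
      refine le_trans (ENNReal.toReal_mono hRHSfin hcompl) ?_
      rw [ENNReal.toReal_add (ENNReal.add_ne_top.mpr ⟨hfin _,
          (ENNReal.sum_lt_top.mpr (fun j _ => measure_lt_top μ _)).ne⟩)
          ((ENNReal.sum_lt_top.mpr (fun j _ => measure_lt_top μ _)).ne),
        ENNReal.toReal_add (hfin _) ((ENNReal.sum_lt_top.mpr (fun j _ => measure_lt_top μ _)).ne),
        ENNReal.toReal_sum (fun j _ => hfin _), ENNReal.toReal_sum (fun j _ => hfin _)]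
      have hAc : (μ Aᶜ).toReal = 1 - f n := by
        rw [prob_compl_eq_one_sub (hmeasA n),
          ENNReal.toReal_sub_of_le prob_le_one ENNReal.one_ne_top, ENNReal.toReal_one]
      have hRc : ∀ j ∈ 𝒜act, (μ (R n j)ᶜ).toReal = 1 - g n j := by
        intro j _
        rw [prob_compl_eq_one_sub (hmeasR n j),
          ENNReal.toReal_sub_of_le prob_le_one ENNReal.one_ne_top, ENNReal.toReal_one]
      rw [hAc, Finset.sum_congr rfl hRc]
    have hGR : (μ (A ∩ B ∩ C)ᶜ).toReal = 1 - (μ (A ∩ B ∩ C)).toReal := by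
      rw [prob_compl_eq_one_sub hGm,
        ENNReal.toReal_sub_of_le prob_le_one ENNReal.one_ne_top, ENNReal.toReal_one]
    have hmono : (μ (A ∩ B ∩ C)).toReal ≤ t n :=
      ENNReal.toReal_mono (hfin _) (measure_mono hsubT)
    rw [hGR] at hcomplR
    linarith
  -- limit of the "good" part
  have hq : Tendsto (fun n => 1 - (1 - f n) - ∑ j ∈ 𝒜act, (1 - g n j)) atTop (nhds 1) := by
    have h2 : Tendsto (fun n => ∑ j ∈ 𝒜act, (1 - g n j)) atTop (nhds 0) := by
      have := tendsto_finset_sum 𝒜act (fun j hj =>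
        (tendsto_const_nhds.sub (hb j hj) : Tendsto (fun n => 1 - g n j) atTop (nhds (1 - 1))))
      simpa using this
    have := ((tendsto_const_nhds.sub (tendsto_const_nhds.sub ha)).sub h2 :
      Tendsto (fun n => 1 - (1 - f n) - ∑ j ∈ 𝒜act, (1 - g n j)) atTop
        (nhds (1 - (1 - 1) - 0)))
    simpa using this
  -- boundedness facts
  have htle1 : ∀ n, t n ≤ 1 := fun n => by
    have := prob_le_one (μ := μ)
      (s := {ω | {j | j ∈ Ahat n ω ∧ ω ∈ R n j} = (𝒜act : Set (Fin p))})
    simpa [ht] using ENNReal.toReal_mono ENNReal.one_ne_top this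
  have hgle1 : ∀ n j, g n j ≤ 1 := fun n j => by
    simpa [hg] using ENNReal.toReal_mono ENNReal.one_ne_top (prob_le_one (μ := μ) (s := R n j))
  have hcobdd : IsCoboundedUnder (· ≥ ·) atTop t :=
    (isBoundedUnder_of ⟨1, fun n => htle1 n⟩).isCoboundedUnder_ge
  -- ε-argument
  refine le_of_forall_sub_le fun ε hε => ?_
  set δ := ε / (2 * (S.card + 1)) with hδ
  have hδpos : 0 < δ := by positivity
  have hev1 : ∀ᶠ n in atTop, 1 - ε / 2 < 1 - (1 - f n) - ∑ j ∈ 𝒜act, (1 - g n j) :=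
    hq.eventually (eventually_gt_nhds (by linarith))
  have hev2 : ∀ᶠ n in atTop, ∀ j ∈ S, g n j < α j + δ := by
    rw [eventually_all_finset]
    intro j hj
    refine eventually_lt_of_limsup_lt (lt_of_le_of_lt (hc j hj) (by linarith)) ?_
    exact isBoundedUnder_of ⟨1, fun n => hgle1 n j⟩
  have hev : ∀ᶠ n in atTop, 1 - (∑ j ∈ S, α j) - ε ≤ t n := by
    filter_upwards [hev1, hev2] with n h1 h2
    have hsum : ∑ j ∈ S, g n j ≤ ∑ j ∈ S, (α j + δ) :=
      Finset.sum_le_sum fun j hj => (h2 j hj).le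
    have hsum2 : ∑ j ∈ S, (α j + δ) = (∑ j ∈ S, α j) + S.card * δ := by
      rw [Finset.sum_add_distrib, Finset.sum_const, nsmul_eq_mul]
    have hcard : (S.card : ℝ) * δ ≤ ε / 2 := by
      have hc0 : (0:ℝ) ≤ S.card := Nat.cast_nonneg _
      have heq : (((S.card : ℝ) + 1)) * δ = ε / 2 := by
        rw [hδ]; field_simp
      nlinarith [hδpos.le]
    have := key n
    have hsn : ∑ j ∈ S, g n j ≤ (∑ j ∈ S, α j) + ε / 2 := by
      calc ∑ j ∈ S, g n j ≤ (∑ j ∈ S, α j) + S.card * δ := by rw [← hsum2]; exact hsum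
        _ ≤ (∑ j ∈ S, α j) + ε / 2 := by linarith
    linarith
  exact le_liminf_of_le hcobdd hev
end
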